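/- Let L be a Lebesgue lattice over a set Z (a Riesz space of real-valued functions on Z closed under dominated pointwise limits). If f and g are elements of L, and U(g) = {z ∈ Z : g(z) ≠ 0}, then the function f·1_{U(g)} (which equals f on U(g) and 0 elsewhere) also belongs to L. -/
import Mathlib


open Filter Topology

/-- `Pdom M`: dominated pointwise limits of sequences in `M`
(sequence `f₀, f₁, …` with `|fₙ| ≤ f₀` for `n ≥ 1`, converging pointwise). -/
def Pdom {Z : Type*} (M : Set (Z → ℝ)) : Set (Z → ℝ) :=
  { f | ∃ F : ℕ → Z → ℝ, (∀ n, F n ∈ M) ∧ (∀ n, |F (n + 1)| ≤ F 0) ∧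
      ∀ z, Tendsto (fun n => F n z) atTop (𝓝 (f z)) }

/-- `U` is a vector subspace of the functions `Z → ℝ`. -/
def IsSubspace {Z : Type*} (U : Set (Z → ℝ)) : Prop :=
  (0 : Z → ℝ) ∈ U ∧ (∀ f g, f ∈ U → g ∈ U → f + g ∈ U) ∧
    ∀ (c : ℝ) (f), f ∈ U → c • f ∈ U

/-- A Riesz space of functions: a subspace closed under pointwise absolute value. -/
def IsRiesz {Z : Type*} (R : Set (Z → ℝ)) : Prop :=
  IsSubspace R ∧ ∀ f, f ∈ R → |f| ∈ R

/-- A Lebesgue lattice: a Riesz space closed under dominated pointwise limits. -/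
def IsLebesgue {Z : Type*} (L : Set (Z → ℝ)) : Prop :=
  IsRiesz L ∧ Pdom L ⊆ L

/-- smallest Riesz space containing `M`. -/
def RGen {Z : Type*} (M : Set (Z → ℝ)) : Set (Z → ℝ) :=
  ⋂₀ { R | IsRiesz R ∧ M ⊆ R }

/-- smallest Lebesgue lattice containing `M`. -/
def LGen {Z : Type*} (M : Set (Z → ℝ)) : Set (Z → ℝ) :=
  ⋂₀ { L | IsLebesgue L ∧ M ⊆ L }

/-- Daniell integral on `R`: additive, homogeneous, monotone, continuous under
decreasing convergence to `0`. -/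
def IsDaniell {Z : Type*} (R : Set (Z → ℝ)) (I : (Z → ℝ) → ℝ) : Prop :=
  IsRiesz R ∧
  (∀ f g, f ∈ R → g ∈ R → I (f + g) = I f + I g) ∧
  (∀ (c : ℝ) (f), f ∈ R → I (c • f) = c * I f) ∧
  (∀ f, f ∈ R → I f ≤ I |f|) ∧
  ∀ F : ℕ → Z → ℝ, (∀ n, F n ∈ R) → (∀ n, 0 ≤ F (n + 1)) →
    (∀ n, F (n + 1) ≤ F n) →
    (∀ z, Tendsto (fun n => F n z) atTop (𝓝 0)) →
    Tendsto (fun n => I (F n)) atTop (𝓝 0)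

/-- elementary tensor `(g ⊗ h)(x, y) = g x * h y`. -/
def tensor {X Y : Type*} (g : X → ℝ) (h : Y → ℝ) : X × Y → ℝ :=
  fun p => g p.1 * h p.2

/-- tensor product `V ⊗ W`: finite sums of elementary tensors. -/
def TensorSet {X Y : Type*} (V : Set (X → ℝ)) (W : Set (Y → ℝ)) :
    Set (X × Y → ℝ) :=
  { f | ∃ (k : ℕ) (g : Fin k → X → ℝ) (h : Fin k → Y → ℝ),
      (∀ i, g i ∈ V) ∧ (∀ i, h i ∈ W) ∧ f = ∑ i, tensor (g i) (h i) }

/-- `iterP U m`: `U₁ = U`, `U_{m+1} = P(U_m)` (0-indexed). -/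
def iterP {Z : Type*} (U : Set (Z → ℝ)) : ℕ → Set (Z → ℝ)
  | 0 => U
  | n + 1 => Pdom (iterP U n)

theorem stmt0 {Z : Type*} (L : Set (Z → ℝ)) (hL : IsLebesgue L)
    (f g : Z → ℝ) (hf : f ∈ L) (hg : g ∈ L) :
    (fun z => if g z ≠ 0 then f z else 0) ∈ L := by

  obtain ⟨⟨⟨h0, hadd, hsmul⟩, habs⟩, hlim⟩ := hL
  have hneg : ∀ a, a ∈ L → -a ∈ L := by
    intro a ha
    have := hsmul (-1) a ha
    simpa using this
  have hsub : ∀ a b, a ∈ L → b ∈ L → a - b ∈ L := by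
    intro a b ha hb
    have := hadd a (-b) ha (hneg b hb)
    simpa [sub_eq_add_neg] using this
  have hmin : ∀ a b, a ∈ L → b ∈ L → (fun z => min (a z) (b z)) ∈ L := by
    intro a b ha hb
    have heq : (fun z => min (a z) (b z)) = (1/2 : ℝ) • (a + b - |a - b|) := by
      funext z
      simp only [Pi.smul_apply, Pi.sub_apply, Pi.add_apply, Pi.abs_apply, smul_eq_mul]
      rcases le_total (a z) (b z) with h | h
      · rw [abs_of_nonpos (by simpa using sub_nonpos.2 h), min_eq_left h]; ring
      · rw [abs_of_nonneg (by simpa using sub_nonneg.2 h), min_eq_right h]; ring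
    rw [heq]
    exact hsmul _ _ (hsub _ _ (hadd _ _ ha hb) (habs _ (hsub _ _ ha hb)))
  have hmax : ∀ a b, a ∈ L → b ∈ L → (fun z => max (a z) (b z)) ∈ L := by
    intro a b ha hb
    have heq : (fun z => max (a z) (b z)) = (1/2 : ℝ) • (a + b + |a - b|) := by
      funext z
      simp only [Pi.smul_apply, Pi.sub_apply, Pi.add_apply, Pi.abs_apply, smul_eq_mul]
      rcases le_total (a z) (b z) with h | h
      · rw [abs_of_nonpos (by simpa using sub_nonpos.2 h), max_eq_right h]; ring
      · rw [abs_of_nonneg (by simpa using sub_nonneg.2 h), max_eq_left h]; ring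
    rw [heq]
    exact hsmul _ _ (hadd _ _ (hadd _ _ ha hb) (habs _ (hsub _ _ ha hb)))
  set F : ℕ → Z → ℝ := fun n =>
    match n with
    | 0 => |f|
    | m + 1 => fun z => max (min (f z) ((m : ℝ) * |g z|)) (-((m : ℝ) * |g z|)) with hF
  apply hlim
  refine ⟨F, ?_, ?_, ?_⟩
  · intro n
    match n with
    | 0 => exact habs f hf
    | m + 1 =>
      have hgm : ((m : ℝ) • |g|) ∈ L := hsmul _ _ (habs g hg)
      have h1 : (fun z => min (f z) (((m : ℝ) • |g|) z)) ∈ L := hmin _ _ hf hgm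
      have h2 := hmax _ _ h1 (hneg _ hgm)
      exact h2
  · intro n z
    simp only [hF, Pi.abs_apply]
    have hb : 0 ≤ (n : ℝ) * |g z| := by positivity
    rw [abs_le]
    constructor
    · calc -|f z| ≤ min (f z) ((n : ℝ) * |g z|) :=
            le_min (neg_abs_le _) (by linarith [abs_nonneg (f z)])
        _ ≤ _ := le_max_left _ _
    · exact max_le (le_trans (min_le_left _ _) (le_abs_self _))
        (by linarith [abs_nonneg (f z)])
  · intro z
    by_cases hz : g z = 0
    · simp only [hz, ne_eq, not_true_eq_false, if_false]
      refine tendsto_const_nhds.congr' ?_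
      filter_upwards [eventually_ge_atTop 1] with n hn
      match n with
      | 0 => omega
      | m + 1 => simp [hF, hz]
    · simp only [ne_eq, hz, not_false_eq_true, if_true]
      obtain ⟨N, hN⟩ := exists_nat_ge (|f z| / |g z|)
      have hgz : 0 < |g z| := abs_pos.2 hz
      have hN' : |f z| ≤ (N : ℝ) * |g z| := by
        rw [div_le_iff₀ hgz] at hN
        linarith
      refine tendsto_const_nhds.congr' ?_
      filter_upwards [eventually_ge_atTop (N + 1)] with n hn
      match n with
      | 0 => omega
      | m + 1 =>
        have hm : (N : ℝ) ≤ (m : ℝ) := by exact_mod_cast Nat.le_of_succ_le_succ hn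
        have h1 : |f z| ≤ (m : ℝ) * |g z| := le_trans hN' (by nlinarith)
        have h2 : f z ≤ (m : ℝ) * |g z| := le_trans (le_abs_self _) h1
        have h3 : -((m : ℝ) * |g z|) ≤ f z := by
          have := neg_abs_le (f z); linarith
        simp [hF, min_eq_left h2, max_eq_left h3]
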